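/- arXiv:1801.00802 — 2 statements merged into one kernel-verified Lean document; each statement's English description precedes it below -/
import Mathlib

section
/- Under ignorability Y(a) ⫫ A | (X, U) and overlap 0 < c₁ ≤ e(X,U) ≤ c₂ < 1, for any (possibly misspecified) measurable bounded functions m₀(X,U), m₁(X,U) and ẽ(X,U) with values in [c₁, c₂]: if either (i) ẽ = e almost surely, or (ii) mₐ(X,U) = E(Y | A = a, X, U) almost surely for a = 0,1, then E[ A(Y - m₁(X,U))/ẽ(X,U) + m₁(X,U) - (1-A)(Y - m₀(X,U))/(1-ẽ(X,U)) - m₀(X,U) ] = E[Y(1) - Y(0)]. -/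
open MeasureTheory ProbabilityTheory

open scoped ENNReal NNReal

section AuxAIPW

variable {Ω : Type*} {m' : MeasurableSpace Ω} [mΩ : MeasurableSpace Ω]
  [StandardBorelSpace Ω] {μ : Measure Ω} [IsProbabilityMeasure μ]

/-- Product rule for conditional expectation under conditional independence, where one
factor is a `{0,1}`-valued function. -/
lemma key_condExp_mul (hm' : m' ≤ mΩ) {f A : Ω → ℝ}
    (hf : Measurable[mΩ] f) (hfi : Integrable f μ)
    (hAm : Measurable[mΩ] A) (hA01 : ∀ ω, A ω = 0 ∨ A ω = 1)
    (hind : CondIndepFun m' hm' f A μ) :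
    μ[fun ω => f ω * A ω | m'] =ᵐ[μ] fun ω => (μ[f|m']) ω * (μ[A|m']) ω := by
  classical
  set T : Set Ω := A ⁻¹' {1} with hTdef
  have hT : MeasurableSet[mΩ] T := hAm (measurableSet_singleton 1)
  have hAeq : A = T.indicator (fun _ => (1:ℝ)) := by
    funext ω
    rcases hA01 ω with h | h
    · have : ω ∉ T := by simp [hTdef, h]
      simp [Set.indicator_of_notMem this, h]
    · have : ω ∈ T := by simp [hTdef, h]
      simp [Set.indicator_of_mem this, h]
  set g : Ω → ℝ := μ[T.indicator (fun _ => (1:ℝ))|m'] with hgdef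
  have hgsm : StronglyMeasurable[m'] g := stronglyMeasurable_condExp
  have hgm : Measurable[mΩ] g := (hgsm.mono hm').measurable
  have hgi : Integrable g μ := integrable_condExp
  have hg0 : 0 ≤ᵐ[μ] g :=
    condExp_nonneg (Filter.Eventually.of_forall fun ω =>
      Set.indicator_nonneg (fun _ _ => zero_le_one) ω)
  have hg1 : g ≤ᵐ[μ] fun _ => (1:ℝ) := by
    have h1 : μ[fun _ => (1:ℝ)|m'] = fun _ => (1:ℝ) := condExp_const hm' 1
    have := condExp_mono (μ := μ) (m := m')
      ((integrable_const (1:ℝ)).indicator hT)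
      (integrable_const (1:ℝ))
      (Filter.Eventually.of_forall fun ω =>
        Set.indicator_le_self' (fun _ _ => zero_le_one) ω)
    rw [h1] at this
    exact this
  have hgbd : ∀ᵐ ω ∂μ, ‖g ω‖ ≤ 1 := by
    filter_upwards [hg0, hg1] with ω h0 h1
    rw [Real.norm_eq_abs, abs_of_nonneg h0]; exact h1
  -- characterization of conditional independence
  have hchar := (condIndepFun_iff_condExp_inter_preimage_eq_mul (μ := μ)
      (hm' := hm') hf hAm).mp hind
  -- Step (**): for measurable s and G ∈ m',
  -- μ (f⁻¹'s ∩ T ∩ G) (as real) = ∫_{f⁻¹'s ∩ G} g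
  have star : ∀ s : Set ℝ, MeasurableSet s → ∀ G : Set Ω, MeasurableSet[m'] G →
      (μ (G ∩ (f ⁻¹' s ∩ T))).toReal = ∫ ω in G ∩ f ⁻¹' s, g ω ∂μ := by
    intro s hs G hG
    have hEs : MeasurableSet[mΩ] (f ⁻¹' s) := hf hs
    have hET : MeasurableSet[mΩ] (f ⁻¹' s ∩ T) := hEs.inter hT
    have hintET : Integrable ((f ⁻¹' s ∩ T).indicator (fun _ => (1:ℝ))) μ :=
      (integrable_const (1:ℝ)).indicator hET
    have hintE : Integrable ((f ⁻¹' s).indicator (fun _ => (1:ℝ))) μ :=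
      (integrable_const (1:ℝ)).indicator hEs
    have hintgE : Integrable (g * (f ⁻¹' s).indicator (fun _ => (1:ℝ))) μ := by
      refine hgi.mono (hgm.aestronglyMeasurable.mul hintE.aestronglyMeasurable) ?_
      filter_upwards with ω
      simp only [Pi.mul_apply, norm_mul, Real.norm_eq_abs]
      calc |g ω| * |(f ⁻¹' s).indicator (fun _ => (1:ℝ)) ω| ≤ |g ω| * 1 := by
            gcongr
            rcases Set.indicator_eq_zero_or_self (f ⁻¹' s) (fun _ => (1:ℝ)) ω with h | h <;>
              simp [h]
        _ = ‖g ω‖ := by rw [mul_one, Real.norm_eq_abs]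
    have hpull := condExp_stronglyMeasurable_mul_of_bound hm' hgsm hintE 1 hgbd
    calc (μ (G ∩ (f ⁻¹' s ∩ T))).toReal
        = ∫ ω in G, ((f ⁻¹' s ∩ T).indicator (fun _ => (1:ℝ))) ω ∂μ := by
          rw [setIntegral_indicator hET, setIntegral_const, smul_eq_mul, mul_one]; rfl
      _ = ∫ ω in G, (μ[(f ⁻¹' s ∩ T).indicator (fun _ => (1:ℝ))|m']) ω ∂μ :=
          (setIntegral_condExp hm' hintET hG).symm
      _ = ∫ ω in G, ((μ[(f ⁻¹' s).indicator (fun _ => (1:ℝ))|m']) ω * g ω) ∂μ := by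
          refine integral_congr_ae (ae_restrict_of_ae ?_)
          have := hchar s {1} hs (measurableSet_singleton 1)
          filter_upwards [this] with ω hω
          exact hω
      _ = ∫ ω in G, (μ[g * (f ⁻¹' s).indicator (fun _ => (1:ℝ))|m']) ω ∂μ := by
          refine integral_congr_ae (ae_restrict_of_ae ?_)
          filter_upwards [hpull] with ω hω
          rw [hω]; simp [mul_comm]
      _ = ∫ ω in G, (g * (f ⁻¹' s).indicator (fun _ => (1:ℝ))) ω ∂μ :=
          setIntegral_condExp hm' hintgE hG
      _ = ∫ ω in G, ((f ⁻¹' s).indicator g) ω ∂μ := by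
          refine integral_congr_ae (ae_restrict_of_ae (Filter.Eventually.of_forall fun ω => ?_))
          by_cases h : ω ∈ f ⁻¹' s <;> simp [Set.indicator_of_mem, Set.indicator_of_notMem, h]
      _ = ∫ ω in G ∩ f ⁻¹' s, g ω ∂μ := setIntegral_indicator hEs
  -- Step 2: equality of pushforward measures
  have hMeq : ∀ G : Set Ω, MeasurableSet[m'] G →
      Measure.map f (μ.restrict (G ∩ T)) =
      Measure.map f ((μ.restrict G).withDensity (fun ω => ENNReal.ofReal (g ω))) := by
    intro G hG
    ext s hs
    rw [Measure.map_apply hf hs, Measure.map_apply hf hs,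
      Measure.restrict_apply (hf hs), withDensity_apply _ (hf hs),
      Measure.restrict_restrict (hf hs), Set.inter_left_comm, Set.inter_comm (f ⁻¹' s) G,
      ← ofReal_integral_eq_lintegral_ofReal hgi.integrableOn (ae_restrict_of_ae hg0),
      ← star s hs G hG, ENNReal.ofReal_toReal (measure_ne_top μ _)]
  -- Step 3: set integrals against m'-measurable sets agree
  have hsetint : ∀ G : Set Ω, MeasurableSet[m'] G →
      ∫ ω in G, f ω * A ω ∂μ = ∫ ω in G, f ω * g ω ∂μ := by
    intro G hG
    have h1 : (fun ω => f ω * A ω) = fun ω => T.indicator f ω := by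
      funext ω
      rcases hA01 ω with h | h
      · have hω : ω ∉ T := by simp [hTdef, h]
        simp [Set.indicator_of_notMem hω, h]
      · have hω : ω ∈ T := by simp [hTdef, h]
        simp [Set.indicator_of_mem hω, h]
    have hgnn : Measurable (fun ω => (g ω).toNNReal) := measurable_real_toNNReal.comp hgm
    calc ∫ ω in G, f ω * A ω ∂μ
        = ∫ ω in G, T.indicator f ω ∂μ := by rw [h1]
      _ = ∫ ω in G ∩ T, f ω ∂μ := setIntegral_indicator hT
      _ = ∫ x, id x ∂(Measure.map f (μ.restrict (G ∩ T))) := by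
          rw [integral_map hf.aemeasurable aestronglyMeasurable_id]; rfl
      _ = ∫ x, id x ∂(Measure.map f ((μ.restrict G).withDensity
            (fun ω => ENNReal.ofReal (g ω)))) := by rw [hMeq G hG]
      _ = ∫ ω, f ω ∂((μ.restrict G).withDensity (fun ω => ENNReal.ofReal (g ω))) := by
          rw [integral_map hf.aemeasurable aestronglyMeasurable_id]; rfl
      _ = ∫ ω, (g ω).toNNReal • f ω ∂(μ.restrict G) := by
          rw [show (fun ω => ENNReal.ofReal (g ω)) = fun ω => ((g ω).toNNReal : ℝ≥0∞) from rfl]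
          exact integral_withDensity_eq_integral_smul hgnn f
      _ = ∫ ω in G, f ω * g ω ∂μ := by
          refine integral_congr_ae (ae_restrict_of_ae ?_)
          filter_upwards [hg0] with ω h0
          rw [NNReal.smul_def, Real.coe_toNNReal _ h0, smul_eq_mul, mul_comm]
  -- Step 4: conclude via uniqueness of conditional expectation
  have hcA : μ[A|m'] = g := by rw [hAeq]
  rw [hcA]
  have hfAint : Integrable (fun ω => f ω * A ω) μ := by
    refine hfi.mono ((hf.mul hAm).aestronglyMeasurable) ?_
    filter_upwards with ω
    rcases hA01 ω with h | h <;> simp [h, abs_mul, abs_nonneg]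
  have hgfint : Integrable (g * f) μ := by
    refine hfi.mono ((hgm.mul hf).aestronglyMeasurable) ?_
    filter_upwards [hgbd] with ω hb
    calc ‖(g * f) ω‖ = ‖g ω‖ * ‖f ω‖ := by simp [norm_mul]
      _ ≤ 1 * ‖f ω‖ := by gcongr
      _ = ‖f ω‖ := one_mul _
  have hpull2 := condExp_stronglyMeasurable_mul_of_bound hm' hgsm hfi 1 hgbd
  refine (ae_eq_condExp_of_forall_setIntegral_eq hm' hfAint ?_ ?_ ?_).symm
  · intro s hs hμs
    refine Integrable.integrableOn ?_
    refine Integrable.mono (integrable_condExp (m := m') (f := f) (μ := μ))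
      ((stronglyMeasurable_condExp.mono hm').aestronglyMeasurable.mul
        hgm.aestronglyMeasurable) ?_
    filter_upwards [hgbd] with ω hb
    calc ‖(μ[f|m']) ω * g ω‖ = ‖(μ[f|m']) ω‖ * ‖g ω‖ := norm_mul _ _
      _ ≤ ‖(μ[f|m']) ω‖ * 1 := by gcongr
      _ = ‖(μ[f|m']) ω‖ := mul_one _
  · intro s hs hμs
    calc ∫ ω in s, (μ[f|m']) ω * g ω ∂μ
        = ∫ ω in s, (μ[g * f|m']) ω ∂μ := by
          refine integral_congr_ae (ae_restrict_of_ae ?_)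
          filter_upwards [hpull2] with ω hω
          rw [hω]; simp [mul_comm]
      _ = ∫ ω in s, (g * f) ω ∂μ := setIntegral_condExp hm' hgfint hs
      _ = ∫ ω in s, f ω * g ω ∂μ := by
          refine integral_congr_ae (ae_restrict_of_ae (Filter.Eventually.of_forall fun ω => ?_))
          simp [mul_comm]
      _ = ∫ ω in s, f ω * A ω ∂μ := (hsetint s hs).symm
  · exact (stronglyMeasurable_condExp.mul hgsm).aestronglyMeasurable

/-- One arm of the AIPW double-robustness argument. -/
lemma arm_integral (hm' : m' ≤ mΩ) {f A k h g : Ω → ℝ}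
    (hf : Measurable[mΩ] f) (hfi : Integrable f μ)
    (hAm : Measurable[mΩ] A) (hA01 : ∀ ω, A ω = 0 ∨ A ω = 1)
    (hind : CondIndepFun m' hm' f A μ)
    (hk : StronglyMeasurable[m'] k) {B : ℝ} (hkbd : ∀ ω, |k ω| ≤ B)
    (hh : StronglyMeasurable[m'] h) {c₁ : ℝ} (hc₁ : 0 < c₁)
    (hhbd : ∀ ω, c₁ ≤ h ω) (hgbd : ∀ ω, c₁ ≤ g ω)
    (hge : μ[A|m'] =ᵐ[μ] g)
    (hdr : (h =ᵐ[μ] g) ∨ (μ[fun ω => A ω * (f ω - k ω)|m'] =ᵐ[μ] 0)) :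
    ∫ ω, A ω * (f ω - k ω) / h ω ∂μ = (∫ ω, f ω ∂μ) - ∫ ω, k ω ∂μ := by
  have hkm : Measurable[mΩ] k := (hk.mono hm').measurable
  have hhm : Measurable[mΩ] h := (hh.mono hm').measurable
  have hki : Integrable k μ := by
    refine (integrable_const B).mono ((hk.mono hm').aestronglyMeasurable) ?_
    filter_upwards with ω
    exact (hkbd ω).trans (le_abs_self B)
  have hA1 : ∀ ω, |A ω| ≤ 1 := by
    intro ω; rcases hA01 ω with h' | h' <;> simp [h']
  have hAi : Integrable A μ := by
    refine (integrable_const (1:ℝ)).mono hAm.aestronglyMeasurable ?_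
    filter_upwards with ω
    simpa using hA1 ω
  have hfAi : Integrable (fun ω => f ω * A ω) μ := by
    refine hfi.mono ((hf.mul hAm).aestronglyMeasurable) ?_
    filter_upwards with ω
    calc ‖f ω * A ω‖ = ‖f ω‖ * |A ω| := by simp [abs_mul]
      _ ≤ ‖f ω‖ * 1 := by gcongr; exact hA1 ω
      _ = ‖f ω‖ := mul_one _
  have hkAi : Integrable (fun ω => k ω * A ω) μ := by
    refine hki.mono ((hkm.mul hAm).aestronglyMeasurable) ?_
    filter_upwards with ω
    calc ‖k ω * A ω‖ = ‖k ω‖ * |A ω| := by simp [abs_mul]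
      _ ≤ ‖k ω‖ * 1 := by gcongr; exact hA1 ω
      _ = ‖k ω‖ := mul_one _
  set φ : Ω → ℝ := fun ω => A ω * (f ω - k ω) with hφdef
  have hφeq : φ = fun ω => f ω * A ω - k ω * A ω := by
    funext ω; simp only [hφdef]; ring
  have hφi : Integrable φ μ := by rw [hφeq]; exact hfAi.sub hkAi
  have hφm : Measurable[mΩ] φ := hAm.mul (hf.sub hkm)
  have hkey := key_condExp_mul hm' hf hfi hAm hA01 hind
  have hpullk := condExp_stronglyMeasurable_mul_of_bound hm' hk hAi |B|
    (Filter.Eventually.of_forall fun ω => (hkbd ω).trans (le_abs_self B))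
  have hE : μ[φ|m'] =ᵐ[μ] fun ω => ((μ[f|m']) ω - k ω) * g ω := by
    have h1 : μ[φ|m'] =ᵐ[μ] μ[fun ω => f ω * A ω|m'] - μ[fun ω => k ω * A ω|m'] := by
      rw [hφeq]
      exact condExp_sub hfAi hkAi m'
    have h2 : μ[fun ω => k ω * A ω|m'] =ᵐ[μ] k * μ[A|m'] := by
      have : (fun ω => k ω * A ω) = k * A := rfl
      rw [this]; exact hpullk
    filter_upwards [h1, h2, hkey, hge] with ω e1 e2 e3 e4
    simp only [Pi.sub_apply, Pi.mul_apply] at e1 e2 ⊢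
    rw [e1, e2, e3, e4]; ring
  set w : Ω → ℝ := fun ω => (h ω)⁻¹ with hwdef
  have hwsm : StronglyMeasurable[m'] w := (hh.measurable.inv).stronglyMeasurable
  have hwbd : ∀ ω, ‖w ω‖ ≤ c₁⁻¹ := by
    intro ω
    have hpos : 0 < h ω := lt_of_lt_of_le hc₁ (hhbd ω)
    rw [hwdef, Real.norm_eq_abs, abs_of_nonneg (inv_nonneg.mpr hpos.le)]
    exact inv_anti₀ hc₁ (hhbd ω)
  have hwφi : Integrable (w * φ) μ := by
    refine ((hfi.abs.add (integrable_const |B|)).const_mul c₁⁻¹).mono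
      (((hhm.inv).mul hφm).aestronglyMeasurable) ?_
    filter_upwards with ω
    have h1 : ‖(w * φ) ω‖ = ‖w ω‖ * (|A ω| * |f ω - k ω|) := by
      simp [hφdef, abs_mul, Real.norm_eq_abs, mul_assoc]
    rw [h1]
    have h2 : |f ω - k ω| ≤ |f ω| + |B| := by
      have h3 := norm_sub_le (f ω) (k ω)
      simp only [Real.norm_eq_abs] at h3
      have := hkbd ω
      have := le_abs_self B
      linarith
    calc ‖w ω‖ * (|A ω| * |f ω - k ω|) ≤ c₁⁻¹ * (1 * (|f ω| + |B|)) := by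
          refine mul_le_mul (hwbd ω)
            (mul_le_mul (hA1 ω) h2 (abs_nonneg _) zero_le_one) ?_ ?_
          · positivity
          · positivity
      _ = c₁⁻¹ * (|f ω| + |B|) := by ring
      _ ≤ ‖c₁⁻¹ * (|f ω| + |B|)‖ := le_abs_self _
  have hstep1 : ∫ ω, A ω * (f ω - k ω) / h ω ∂μ = ∫ ω, (w * φ) ω ∂μ := by
    refine integral_congr_ae (Filter.Eventually.of_forall fun ω => ?_)
    simp only [Pi.mul_apply, hwdef, hφdef]
    rw [div_eq_mul_inv, mul_comm]
  have hpullw := condExp_stronglyMeasurable_mul_of_bound hm' hwsm hφi c₁⁻¹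
    (Filter.Eventually.of_forall hwbd)
  have hstep2 : ∫ ω, (w * φ) ω ∂μ = ∫ ω, w ω * (μ[φ|m']) ω ∂μ := by
    rw [← integral_condExp (μ := μ) (f := w * φ) hm']
    refine integral_congr_ae ?_
    filter_upwards [hpullw] with ω e
    rw [e]; rfl
  rcases hdr with hcase | hcase
  · have : ∫ ω, w ω * (μ[φ|m']) ω ∂μ = ∫ ω, ((μ[f|m']) ω - k ω) ∂μ := by
      refine integral_congr_ae ?_
      filter_upwards [hE, hcase] with ω e1 e2
      have hgne : g ω ≠ 0 := (lt_of_lt_of_le hc₁ (hgbd ω)).ne'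
      rw [e1, hwdef]
      simp only []
      rw [e2]
      field_simp
    rw [hstep1, hstep2, this, integral_sub integrable_condExp hki,
      integral_condExp (μ := μ) (f := f) hm']
  · have h0 : ∫ ω, w ω * (μ[φ|m']) ω ∂μ = 0 := by
      have : (fun ω => w ω * (μ[φ|m']) ω) =ᵐ[μ] 0 := by
        filter_upwards [hcase] with ω e
        simp [e]
      rw [integral_congr_ae this]; simp
    have hfk : (μ[f|m']) =ᵐ[μ] k := by
      filter_upwards [hE, hcase] with ω e1 e2
      have hgne : g ω ≠ 0 := (lt_of_lt_of_le hc₁ (hgbd ω)).ne'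
      have : ((μ[f|m']) ω - k ω) * g ω = 0 := by rw [← e1, e2]; rfl
      rcases mul_eq_zero.mp this with h' | h'
      · linarith [sub_eq_zero.mp (by linarith : (μ[f|m']) ω - k ω = 0)]
      · exact absurd h' hgne
    have : ∫ ω, f ω ∂μ = ∫ ω, k ω ∂μ := by
      rw [← integral_condExp (μ := μ) (f := f) hm']
      exact integral_congr_ae hfk
    rw [hstep1, hstep2, h0, this, sub_self]

/-- Integrability of an arm of the AIPW functional. -/
lemma integrable_arm {A f k h : Ω → ℝ}
    (hAm : Measurable[mΩ] A) (hA1 : ∀ ω, |A ω| ≤ 1)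
    (hf : Measurable[mΩ] f) (hfi : Integrable f μ)
    (hkm : Measurable[mΩ] k) {B : ℝ} (hkbd : ∀ ω, |k ω| ≤ B)
    (hhm : Measurable[mΩ] h) {c₁ : ℝ} (hc₁ : 0 < c₁) (hhbd : ∀ ω, c₁ ≤ h ω) :
    Integrable (fun ω => A ω * (f ω - k ω) / h ω) μ := by
  refine ((hfi.abs.add (integrable_const |B|)).const_mul c₁⁻¹).mono
    (((hAm.mul (hf.sub hkm)).div hhm).aestronglyMeasurable) ?_
  filter_upwards with ω
  have hpos : 0 < h ω := lt_of_lt_of_le hc₁ (hhbd ω)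
  have h2 : |f ω - k ω| ≤ |f ω| + |B| := by
    have h3 := norm_sub_le (f ω) (k ω)
    simp only [Real.norm_eq_abs] at h3
    have := hkbd ω
    have := le_abs_self B
    linarith
  have h1 : ‖A ω * (f ω - k ω) / h ω‖ = |A ω| * |f ω - k ω| * (h ω)⁻¹ := by
    rw [Real.norm_eq_abs, abs_div, abs_mul, abs_of_pos hpos, div_eq_mul_inv]
  rw [h1]
  calc |A ω| * |f ω - k ω| * (h ω)⁻¹ ≤ 1 * (|f ω| + |B|) * c₁⁻¹ := by
        refine mul_le_mul (mul_le_mul (hA1 ω) h2 (abs_nonneg _) zero_le_one)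
          (inv_anti₀ hc₁ (hhbd ω)) (by positivity) (by positivity)
    _ = c₁⁻¹ * (|f ω| + |B|) := by ring
    _ ≤ ‖c₁⁻¹ * (|f ω| + |B|)‖ := le_abs_self _

end AuxAIPW

/-- Double robustness of the AIPW estimand: under ignorability and overlap,
if either the working propensity score `et` equals the true one `e` a.s., or
the working outcome regressions `m₀, m₁` are correct (expressed as
`E[A (Y - m₁(X,U)) | X, U] = 0` and `E[(1-A)(Y - m₀(X,U)) | X, U] = 0` a.s.),
then the AIPW functional recovers `E[Y(1) - Y(0)]`. -/
theorem stmt11 {Ω : Type*} [MeasurableSpace Ω] [StandardBorelSpace Ω]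
    (μ : Measure Ω) [IsProbabilityMeasure μ]
    {p q : ℕ} (A Y0 Y1 : Ω → ℝ) (X : Ω → Fin p → ℝ) (U : Ω → Fin q → ℝ)
    (hA : Measurable A) (hY0 : Measurable Y0) (hY1 : Measurable Y1)
    (hX : Measurable X) (hU : Measurable U)
    (hA01 : ∀ ω, A ω = 0 ∨ A ω = 1)
    (hint0 : Integrable Y0 μ) (hint1 : Integrable Y1 μ)
    (e m₀ m₁ et : (Fin p → ℝ) × (Fin q → ℝ) → ℝ)
    (hem : Measurable e) (hm₀ : Measurable m₀) (hm₁ : Measurable m₁)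
    (het : Measurable et)
    (c₁ c₂ : ℝ) (hc₁ : 0 < c₁) (hc₂ : c₂ < 1)
    (hov : ∀ ω, c₁ ≤ e (X ω, U ω) ∧ e (X ω, U ω) ≤ c₂)
    (hetbd : ∀ x, c₁ ≤ et x ∧ et x ≤ c₂)
    (hmbd : ∃ B : ℝ, ∀ x, |m₀ x| ≤ B ∧ |m₁ x| ≤ B)
    (he : (μ[A | MeasurableSpace.comap (fun ω => (X ω, U ω)) inferInstance])
      =ᵐ[μ] fun ω => e (X ω, U ω))
    (hig0 : CondIndepFun
      (MeasurableSpace.comap (fun ω => (X ω, U ω)) inferInstance)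
      ((hX.prodMk hU).comap_le) Y0 A μ)
    (hig1 : CondIndepFun
      (MeasurableSpace.comap (fun ω => (X ω, U ω)) inferInstance)
      ((hX.prodMk hU).comap_le) Y1 A μ)
    (hdr :
      ((fun ω => et (X ω, U ω)) =ᵐ[μ] fun ω => e (X ω, U ω)) ∨
      (((μ[fun ω => A ω * ((A ω * Y1 ω + (1 - A ω) * Y0 ω) - m₁ (X ω, U ω)) |
            MeasurableSpace.comap (fun ω => (X ω, U ω)) inferInstance])
          =ᵐ[μ] 0) ∧
        ((μ[fun ω => (1 - A ω) * ((A ω * Y1 ω + (1 - A ω) * Y0 ω) - m₀ (X ω, U ω)) |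
            MeasurableSpace.comap (fun ω => (X ω, U ω)) inferInstance])
          =ᵐ[μ] 0))) :
    ∫ ω, A ω * ((A ω * Y1 ω + (1 - A ω) * Y0 ω) - m₁ (X ω, U ω)) / et (X ω, U ω)
        + m₁ (X ω, U ω)
        - (1 - A ω) * ((A ω * Y1 ω + (1 - A ω) * Y0 ω) - m₀ (X ω, U ω)) /
            (1 - et (X ω, U ω))
        - m₀ (X ω, U ω) ∂μ =
      ∫ ω, Y1 ω - Y0 ω ∂μ := by
  classical
  obtain ⟨B, hB⟩ := hmbd
  have hm' : MeasurableSpace.comap (fun ω => (X ω, U ω)) inferInstance ≤ _ :=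
    (hX.prodMk hU).comap_le
  -- strong measurability w.r.t. the comap σ-algebra
  have hcm : ∀ {φ : (Fin p → ℝ) × (Fin q → ℝ) → ℝ}, Measurable φ →
      StronglyMeasurable[MeasurableSpace.comap (fun ω => (X ω, U ω)) inferInstance]
        (fun ω => φ (X ω, U ω)) := by
    intro φ hφ
    have : Measurable[MeasurableSpace.comap (fun ω => (X ω, U ω)) inferInstance]
        (fun ω => φ (X ω, U ω)) := fun s hs => ⟨φ ⁻¹' s, hφ hs, rfl⟩
    exact this.stronglyMeasurable
  have hA1 : ∀ ω, |A ω| ≤ 1 := by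
    intro ω; rcases hA01 ω with h | h <;> simp [h]
  have hAi : Integrable A μ := by
    refine (integrable_const (1 : ℝ)).mono hA.aestronglyMeasurable ?_
    filter_upwards with ω
    simpa using hA1 ω
  have hA'1 : ∀ ω, |1 - A ω| ≤ 1 := by
    intro ω; rcases hA01 ω with h | h <;> simp [h]
  have hA'01 : ∀ ω, 1 - A ω = 0 ∨ 1 - A ω = 1 := by
    intro ω; rcases hA01 ω with h | h <;> simp [h]
  have hA'm : Measurable (fun ω => 1 - A ω) := measurable_const.sub hA
  -- pointwise simplifications using A ∈ {0,1}
  have hp1 : (fun ω => A ω * ((A ω * Y1 ω + (1 - A ω) * Y0 ω) - m₁ (X ω, U ω))) =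
      fun ω => A ω * (Y1 ω - m₁ (X ω, U ω)) := by
    funext ω; rcases hA01 ω with h | h <;> (rw [h]; ring)
  have hp0 : (fun ω => (1 - A ω) * ((A ω * Y1 ω + (1 - A ω) * Y0 ω) - m₀ (X ω, U ω))) =
      fun ω => (1 - A ω) * (Y0 ω - m₀ (X ω, U ω)) := by
    funext ω; rcases hA01 ω with h | h <;> (rw [h]; ring)
  -- conditional independence for the (1 - A) arm
  have hig0' : CondIndepFun
      (MeasurableSpace.comap (fun ω => (X ω, U ω)) inferInstance)
      ((hX.prodMk hU).comap_le) Y0 (fun ω => 1 - A ω) μ :=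
    hig0.comp measurable_id (measurable_const.sub measurable_id)
  -- conditional expectation of 1 - A
  have hge0 : (μ[(fun ω => 1 - A ω) |
      MeasurableSpace.comap (fun ω => (X ω, U ω)) inferInstance])
      =ᵐ[μ] fun ω => 1 - e (X ω, U ω) := by
    have h1 : (fun ω => 1 - A ω) = (fun _ => (1 : ℝ)) - A := rfl
    rw [h1]
    have h2 := condExp_sub (m := MeasurableSpace.comap (fun ω => (X ω, U ω)) inferInstance)
      (integrable_const (1 : ℝ)) hAi
    have h3 := condExp_const (μ := μ) hm' (1 : ℝ)
    filter_upwards [h2, he] with ω e2 e4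
    rw [e2]
    simp only [Pi.sub_apply, h3]
    rw [e4]
  -- the two arm identities
  have harm1 : ∫ ω, A ω * (Y1 ω - m₁ (X ω, U ω)) / et (X ω, U ω) ∂μ =
      (∫ ω, Y1 ω ∂μ) - ∫ ω, m₁ (X ω, U ω) ∂μ := by
    refine arm_integral hm' hY1 hint1 hA hA01 hig1 (hcm hm₁)
      (fun ω => (hB (X ω, U ω)).2) (hcm het) hc₁
      (fun ω => (hetbd (X ω, U ω)).1) (fun ω => (hov ω).1) he ?_
    rcases hdr with hcase | hcase
    · exact Or.inl hcase
    · right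
      rw [← hp1]
      exact hcase.1
  have harm0 : ∫ ω, (1 - A ω) * (Y0 ω - m₀ (X ω, U ω)) / (1 - et (X ω, U ω)) ∂μ =
      (∫ ω, Y0 ω ∂μ) - ∫ ω, m₀ (X ω, U ω) ∂μ := by
    refine arm_integral hm' hY0 hint0 hA'm hA'01 hig0'
      (hcm hm₀) (fun ω => (hB (X ω, U ω)).1)
      (hcm (measurable_const.sub het))
      (by linarith : (0:ℝ) < 1 - c₂)
      (fun ω => by linarith [(hetbd (X ω, U ω)).2])
      (fun ω => by linarith [(hov ω).2]) hge0 ?_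
    rcases hdr with hcase | hcase
    · left
      filter_upwards [hcase] with ω h
      simp only [h]
    · right
      rw [← hp0]
      exact hcase.2
  -- integrability of all pieces
  have hT1i : Integrable (fun ω => A ω * (Y1 ω - m₁ (X ω, U ω)) / et (X ω, U ω)) μ :=
    integrable_arm hA hA1 hY1 hint1 (hm₁.comp (hX.prodMk hU))
      (fun ω => (hB (X ω, U ω)).2) (het.comp (hX.prodMk hU)) hc₁
      (fun ω => (hetbd (X ω, U ω)).1)
  have hT0i : Integrable (fun ω => (1 - A ω) * (Y0 ω - m₀ (X ω, U ω)) / (1 - et (X ω, U ω))) μ :=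
    integrable_arm hA'm hA'1 hY0 hint0 (hm₀.comp (hX.prodMk hU))
      (fun ω => (hB (X ω, U ω)).1) (measurable_const.sub (het.comp (hX.prodMk hU)))
      (by linarith : (0:ℝ) < 1 - c₂)
      (fun ω => by linarith [(hetbd (X ω, U ω)).2])
  have hk1i : Integrable (fun ω => m₁ (X ω, U ω)) μ := by
    refine (integrable_const B).mono ((hm₁.comp (hX.prodMk hU)).aestronglyMeasurable) ?_
    filter_upwards with ω
    exact ((hB (X ω, U ω)).2).trans (le_abs_self B)
  have hk0i : Integrable (fun ω => m₀ (X ω, U ω)) μ := by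
    refine (integrable_const B).mono ((hm₀.comp (hX.prodMk hU)).aestronglyMeasurable) ?_
    filter_upwards with ω
    exact ((hB (X ω, U ω)).1).trans (le_abs_self B)
  -- split the integral
  have htot : ∫ ω, A ω * ((A ω * Y1 ω + (1 - A ω) * Y0 ω) - m₁ (X ω, U ω)) / et (X ω, U ω)
        + m₁ (X ω, U ω)
        - (1 - A ω) * ((A ω * Y1 ω + (1 - A ω) * Y0 ω) - m₀ (X ω, U ω)) /
            (1 - et (X ω, U ω))
        - m₀ (X ω, U ω) ∂μ =
      (∫ ω, A ω * (Y1 ω - m₁ (X ω, U ω)) / et (X ω, U ω) ∂μ)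
        + (∫ ω, m₁ (X ω, U ω) ∂μ)
        - (∫ ω, (1 - A ω) * (Y0 ω - m₀ (X ω, U ω)) / (1 - et (X ω, U ω)) ∂μ)
        - ∫ ω, m₀ (X ω, U ω) ∂μ := by
    have hbig : (fun ω => A ω * ((A ω * Y1 ω + (1 - A ω) * Y0 ω) - m₁ (X ω, U ω)) / et (X ω, U ω)
          + m₁ (X ω, U ω)
          - (1 - A ω) * ((A ω * Y1 ω + (1 - A ω) * Y0 ω) - m₀ (X ω, U ω)) /
              (1 - et (X ω, U ω))
          - m₀ (X ω, U ω)) =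
        ((fun ω => A ω * (Y1 ω - m₁ (X ω, U ω)) / et (X ω, U ω))
          + (fun ω => m₁ (X ω, U ω))
          - (fun ω => (1 - A ω) * (Y0 ω - m₀ (X ω, U ω)) / (1 - et (X ω, U ω)))
          - fun ω => m₀ (X ω, U ω)) := by
      funext ω
      show (_ : ℝ) = (((_ : ℝ) + _) - _) - _
      simp only [Pi.add_apply, Pi.sub_apply]
      rcases hA01 ω with h | h <;> (rw [h]; ring)
    rw [hbig, integral_sub' ((hT1i.add hk1i).sub hT0i) hk0i,
      integral_sub' (hT1i.add hk1i) hT0i, integral_add' hT1i hk1i]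
  rw [htot, harm1, harm0, integral_sub hint1 hint0]
  ring
end

section
/- Let X be a square-integrable random variable and Z a square-integrable random vector. Among all square-integrable functions κ_opt minimizing the variance of (I/π)·s(W) - (I/π - 1)·κ(V) over measurable square-integrable κ, where W = (A,X,U,Y), V = (A,X,Y), π = E(I | W) = π(V) is bounded away from 0, I is Bernoulli given W, and E[s(W)] = 0, the optimal choice is κ_opt(V) = E[s(W) | V]. -/
open MeasureTheory ProbabilityTheory
open scoped ENNReal

section Aux

variable {Ω : Type*} {m 𝒱 𝒲 : MeasurableSpace Ω} {m0 : MeasurableSpace Ω} {μ : Measure Ω}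

/-- The conditional expectation of an `L²` function is in `L²`. -/
lemma memℒp_two_condexp (hm : m ≤ m0) [IsFiniteMeasure μ]
    {f : Ω → ℝ} (hf : MemLp f 2 μ) : MemLp (μ[f|m]) 2 μ := by
  set g : Lp ℝ 2 μ := (condExpL2 ℝ ℝ hm (hf.toLp f) : Lp ℝ 2 μ) with hg_def
  have hg : (g : Ω → ℝ) =ᵐ[μ] μ[f|m] := by
    refine ae_eq_condExp_of_forall_setIntegral_eq hm (hf.integrable one_le_two)
      (fun s _ _ => ((Lp.memLp g).integrable one_le_two).integrableOn)
      (fun s hs hμs => ?_) (aestronglyMeasurable_condExpL2 hm _)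
    rw [hg_def, integral_condExpL2_eq hm _ hs hμs.ne]
    exact setIntegral_congr_ae (hm s hs) ((hf.coeFn_toLp).mono fun x hx _ => hx)
  exact (Lp.memLp g).ae_eq hg

/-- Product of an `L^∞` function and an `L²` function is in `L²`. -/
lemma memℒp_two_mul {f g : Ω → ℝ} (hf : MemLp f ∞ μ) (hg : MemLp g 2 μ) :
    MemLp (fun ω => f ω * g ω) 2 μ := by
  have h := hg.smul (φ := f) hf (r := 2)
  exact h

/-- Product of two `L²` functions is integrable. -/
lemma integrable_mul_of_memℒp_two {f g : Ω → ℝ} (hf : MemLp f 2 μ) (hg : MemLp g 2 μ) :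
    Integrable (fun ω => f ω * g ω) μ := by
  have h := hg.smul (φ := f) hf (r := 1)
  exact memLp_one_iff_integrable.mp h

/-- `∫ g * f = ∫ g * E[f|m]` for `m`-measurable `g`. -/
lemma integral_mul_condexp' (hm : m ≤ m0) [IsFiniteMeasure μ]
    {f g : Ω → ℝ} (hg : StronglyMeasurable[m] g) (hf : Integrable f μ)
    (hgf : Integrable (fun ω => g ω * f ω) μ) :
    ∫ ω, g ω * f ω ∂μ = ∫ ω, g ω * (μ[f|m]) ω ∂μ := by
  have h1 : ∫ ω, g ω * f ω ∂μ = ∫ ω, (μ[(fun ω => g ω * f ω)|m]) ω ∂μ :=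
    (integral_condExp hm).symm
  have h2 : μ[(fun ω => g ω * f ω)|m] =ᵐ[μ] fun ω => g ω * (μ[f|m]) ω := by
    have := condExp_mul_of_stronglyMeasurable_left (μ := μ) hg (g := f) hgf hf
    exact this
  rw [h1, integral_congr_ae h2]

/-- Core abstract version of the Robins–Rotnitzky–Zhao optimality result. -/
lemma rrz_aux (μ : Measure Ω) [IsProbabilityMeasure μ]
    (hVW : 𝒱 ≤ 𝒲) (hWle : 𝒲 ≤ m0)
    (I S Pv K : Ω → ℝ)
    (hI : Measurable I) (hI01 : ∀ ω, I ω = 0 ∨ I ω = 1)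
    (hS : StronglyMeasurable[𝒲] S) (hSL2 : MemLp S 2 μ) (hS0 : ∫ ω, S ω ∂μ = 0)
    (hPi : Measurable[𝒱] Pv) (c : ℝ) (hc : 0 < c) (hPibd : ∀ ω, c ≤ Pv ω ∧ Pv ω ≤ 1)
    (hπ : μ[I|𝒲] =ᵐ[μ] Pv)
    (hK : StronglyMeasurable[𝒱] K) (hKL2 : MemLp K 2 μ) :
    variance (fun ω => (Pv ω)⁻¹ * I ω * S ω - ((Pv ω)⁻¹ * I ω - 1) * (μ[S|𝒱]) ω) μ ≤
      variance (fun ω => (Pv ω)⁻¹ * I ω * S ω - ((Pv ω)⁻¹ * I ω - 1) * K ω) μ := by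
  have hVle : 𝒱 ≤ m0 := hVW.trans hWle
  -- basic measurability and bounds
  have hPi0 : Measurable Pv := hPi.mono hVle le_rfl
  have hPipos : ∀ ω, 0 < Pv ω := fun ω => hc.trans_le (hPibd ω).1
  have hPine : ∀ ω, Pv ω ≠ 0 := fun ω => (hPipos ω).ne'
  have hIbd : ∀ ω, ‖I ω‖ ≤ 1 := by
    intro ω; rcases hI01 ω with h | h <;> simp [h]
  have hPiInvbd : ∀ ω, ‖(Pv ω)⁻¹‖ ≤ c⁻¹ := by
    intro ω
    rw [Real.norm_eq_abs, abs_of_pos (inv_pos.mpr (hPipos ω))]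
    exact inv_anti₀ hc (hPibd ω).1
  have hIinf : MemLp I ∞ μ :=
    memLp_top_of_bound hI.aestronglyMeasurable 1 (Filter.Eventually.of_forall hIbd)
  have hPiInvinf : MemLp (fun ω => (Pv ω)⁻¹) ∞ μ :=
    memLp_top_of_bound hPi0.inv.aestronglyMeasurable c⁻¹
      (Filter.Eventually.of_forall hPiInvbd)
  have hPinf : MemLp (fun ω => (Pv ω)⁻¹ * I ω) ∞ μ := by
    refine memLp_top_of_bound (hPi0.inv.mul hI).aestronglyMeasurable c⁻¹
      (Filter.Eventually.of_forall fun ω => ?_)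
    calc ‖(Pv ω)⁻¹ * I ω‖ = ‖(Pv ω)⁻¹‖ * ‖I ω‖ := norm_mul _ _
      _ ≤ c⁻¹ * 1 := by
          exact mul_le_mul (hPiInvbd ω) (hIbd ω) (norm_nonneg _)
            (le_of_lt (inv_pos.mpr hc))
      _ = c⁻¹ := mul_one _
  have hP1inf : MemLp (fun ω => (Pv ω)⁻¹ * I ω - 1) ∞ μ :=
    hPinf.sub (memLp_top_const 1)
  -- conditional expectation m = E[S|𝒱]
  set m : Ω → ℝ := μ[S|𝒱] with hm_def
  have hm𝒱 : StronglyMeasurable[𝒱] m := stronglyMeasurable_condExp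
  have hmL2 : MemLp m 2 μ := memℒp_two_condexp hVle hSL2
  -- G = m - K
  set G : Ω → ℝ := fun ω => m ω - K ω with hG_def
  have hG𝒱 : StronglyMeasurable[𝒱] G := hm𝒱.sub hK
  have hGL2 : MemLp G 2 μ := hmL2.sub hKL2
  -- replacement of I by Pv under the integral
  have claimI : ∀ φ : Ω → ℝ, StronglyMeasurable[𝒲] φ → Integrable φ μ →
      ∫ ω, φ ω * I ω ∂μ = ∫ ω, φ ω * Pv ω ∂μ := by
    intro φ hφ hφint
    have hIint : Integrable I μ := hIinf.integrable le_top
    have hφI : Integrable (fun ω => φ ω * I ω) μ := by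
      have := hφint.bdd_mul hI.aestronglyMeasurable (c := 1) (Filter.Eventually.of_forall hIbd)
      simpa [mul_comm] using this
    rw [integral_mul_condexp' hWle hφ hIint hφI]
    exact integral_congr_ae (by filter_upwards [hπ] with ω hω; rw [hω])
  -- tower property
  have claimV : ∀ ψ : Ω → ℝ, StronglyMeasurable[𝒱] ψ → MemLp ψ 2 μ →
      ∫ ω, ψ ω * S ω ∂μ = ∫ ω, ψ ω * m ω ∂μ := by
    intro ψ hψ hψ2
    exact integral_mul_condexp' hVle hψ (hSL2.integrable one_le_two)
      (integrable_mul_of_memℒp_two hψ2 hSL2)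
  -- means are zero
  have hMean : ∀ g : Ω → ℝ, StronglyMeasurable[𝒱] g → MemLp g 2 μ →
      ∫ ω, ((Pv ω)⁻¹ * I ω * S ω - ((Pv ω)⁻¹ * I ω - 1) * g ω) ∂μ = 0 := by
    intro g hg hg2
    have hPS : Integrable (fun ω => (Pv ω)⁻¹ * I ω * S ω) μ :=
      (memℒp_two_mul hPinf hSL2).integrable one_le_two
    have hP1g : Integrable (fun ω => ((Pv ω)⁻¹ * I ω - 1) * g ω) μ :=
      (memℒp_two_mul hP1inf hg2).integrable one_le_two
    rw [integral_sub hPS hP1g]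
    have h1 : ∫ ω, (Pv ω)⁻¹ * I ω * S ω ∂μ = 0 := by
      have hφ : StronglyMeasurable[𝒲] fun ω => (Pv ω)⁻¹ * S ω :=
        ((hPi.mono hVW le_rfl).inv.stronglyMeasurable).mul hS
      have hφint : Integrable (fun ω => (Pv ω)⁻¹ * S ω) μ :=
        (memℒp_two_mul hPiInvinf hSL2).integrable one_le_two
      have e1 : ∫ ω, (Pv ω)⁻¹ * I ω * S ω ∂μ = ∫ ω, ((Pv ω)⁻¹ * S ω) * I ω ∂μ :=
        integral_congr_ae (Filter.Eventually.of_forall fun ω => by ring)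
      have e2 : ∫ ω, ((Pv ω)⁻¹ * S ω) * Pv ω ∂μ = ∫ ω, S ω ∂μ :=
        integral_congr_ae (Filter.Eventually.of_forall fun ω => by
          field_simp [hPine ω])
      rw [e1, claimI _ hφ hφint, e2, hS0]
    have h2 : ∫ ω, ((Pv ω)⁻¹ * I ω - 1) * g ω ∂μ = 0 := by
      have hgint : Integrable g μ := hg2.integrable one_le_two
      have hφ : StronglyMeasurable[𝒲] fun ω => (Pv ω)⁻¹ * g ω :=
        ((hPi.mono hVW le_rfl).inv.stronglyMeasurable).mul (hg.mono hVW)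
      have hφint : Integrable (fun ω => (Pv ω)⁻¹ * g ω) μ :=
        (memℒp_two_mul hPiInvinf hg2).integrable one_le_two
      have hPg : Integrable (fun ω => ((Pv ω)⁻¹ * g ω) * I ω) μ := by
        have := hφint.bdd_mul hI.aestronglyMeasurable (c := 1) (Filter.Eventually.of_forall hIbd)
        simpa [mul_comm] using this
      have e1 : ∫ ω, ((Pv ω)⁻¹ * I ω - 1) * g ω ∂μ
          = ∫ ω, ((Pv ω)⁻¹ * g ω) * I ω ∂μ - ∫ ω, g ω ∂μ := by
        rw [← integral_sub hPg hgint]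
        exact integral_congr_ae (Filter.Eventually.of_forall fun ω => by ring)
      have e2 : ∫ ω, ((Pv ω)⁻¹ * g ω) * Pv ω ∂μ = ∫ ω, g ω ∂μ :=
        integral_congr_ae (Filter.Eventually.of_forall fun ω => by field_simp [hPine ω])
      rw [e1, claimI _ hφ hφint, e2, sub_self]
    rw [h1, h2, sub_zero]
  -- key orthogonality: ∫ F_m · D = 0
  set Fm : Ω → ℝ := fun ω => (Pv ω)⁻¹ * I ω * S ω - ((Pv ω)⁻¹ * I ω - 1) * m ω with hFm_def
  set D : Ω → ℝ := fun ω => ((Pv ω)⁻¹ * I ω - 1) * G ω with hD_def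
  have hFm2 : MemLp Fm 2 μ := (memℒp_two_mul hPinf hSL2).sub (memℒp_two_mul hP1inf hmL2)
  have hD2 : MemLp D 2 μ := memℒp_two_mul hP1inf hGL2
  have hSG : Integrable (fun ω => S ω * G ω) μ := integrable_mul_of_memℒp_two hSL2 hGL2
  have hmG : Integrable (fun ω => m ω * G ω) μ := integrable_mul_of_memℒp_two hmL2 hGL2
  have hcross : ∫ ω, Fm ω * D ω ∂μ = 0 := by
    set φ : Ω → ℝ := fun ω =>
      ((Pv ω)⁻¹ ^ 2 - (Pv ω)⁻¹) * (S ω * G ω) - ((Pv ω)⁻¹ ^ 2 - 2 * (Pv ω)⁻¹) * (m ω * G ω)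
      with hφ_def
    have hbd1 : ∀ ω, ‖(Pv ω)⁻¹ ^ 2 - (Pv ω)⁻¹‖ ≤ c⁻¹ ^ 2 + c⁻¹ := by
      intro ω
      calc ‖(Pv ω)⁻¹ ^ 2 - (Pv ω)⁻¹‖ ≤ ‖(Pv ω)⁻¹ ^ 2‖ + ‖(Pv ω)⁻¹‖ := norm_sub_le _ _
        _ ≤ c⁻¹ ^ 2 + c⁻¹ := by
            refine add_le_add ?_ (hPiInvbd ω)
            rw [norm_pow]
            exact pow_le_pow_left₀ (norm_nonneg _) (hPiInvbd ω) 2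
    have hbd2 : ∀ ω, ‖(Pv ω)⁻¹ ^ 2 - 2 * (Pv ω)⁻¹‖ ≤ c⁻¹ ^ 2 + 2 * c⁻¹ := by
      intro ω
      calc ‖(Pv ω)⁻¹ ^ 2 - 2 * (Pv ω)⁻¹‖ ≤ ‖(Pv ω)⁻¹ ^ 2‖ + ‖2 * (Pv ω)⁻¹‖ := norm_sub_le _ _
        _ ≤ c⁻¹ ^ 2 + 2 * c⁻¹ := by
            refine add_le_add ?_ ?_
            · rw [norm_pow]
              exact pow_le_pow_left₀ (norm_nonneg _) (hPiInvbd ω) 2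
            · rw [norm_mul]
              calc ‖(2 : ℝ)‖ * ‖(Pv ω)⁻¹‖ = 2 * ‖(Pv ω)⁻¹‖ := by norm_num
                _ ≤ 2 * c⁻¹ := by nlinarith [hPiInvbd ω, norm_nonneg ((Pv ω)⁻¹)]
    have hq1m : Measurable fun ω => (Pv ω)⁻¹ ^ 2 - (Pv ω)⁻¹ := (hPi0.inv.pow_const 2).sub hPi0.inv
    have hq2m : Measurable fun ω => (Pv ω)⁻¹ ^ 2 - 2 * (Pv ω)⁻¹ :=
      (hPi0.inv.pow_const 2).sub (hPi0.inv.const_mul 2)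
    have h1int : Integrable (fun ω => ((Pv ω)⁻¹ ^ 2 - (Pv ω)⁻¹) * (S ω * G ω)) μ :=
      hSG.bdd_mul hq1m.aestronglyMeasurable (Filter.Eventually.of_forall hbd1)
    have h2int : Integrable (fun ω => ((Pv ω)⁻¹ ^ 2 - 2 * (Pv ω)⁻¹) * (m ω * G ω)) μ :=
      hmG.bdd_mul hq2m.aestronglyMeasurable (Filter.Eventually.of_forall hbd2)
    have hφint : Integrable φ μ := h1int.sub h2int
    have hφ𝒲 : StronglyMeasurable[𝒲] φ := by
      have hPiInv𝒲 : StronglyMeasurable[𝒲] fun ω => (Pv ω)⁻¹ :=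
        (hPi.mono hVW le_rfl).inv.stronglyMeasurable
      have hm𝒲 : StronglyMeasurable[𝒲] m := hm𝒱.mono hVW
      have hG𝒲 : StronglyMeasurable[𝒲] G := hG𝒱.mono hVW
      exact ((((hPiInv𝒲.pow 2).sub hPiInv𝒲).mul (hS.mul hG𝒲))).sub
        (((hPiInv𝒲.pow 2).sub (stronglyMeasurable_const.mul hPiInv𝒲)).mul (hm𝒲.mul hG𝒲))
    have hφI : Integrable (fun ω => φ ω * I ω) μ := by
      have := hφint.bdd_mul hI.aestronglyMeasurable (c := 1) (Filter.Eventually.of_forall hIbd)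
      simpa [mul_comm] using this
    -- pointwise identity using I ∈ {0,1}
    have hpt : ∀ ω, Fm ω * D ω = φ ω * I ω - m ω * G ω := by
      intro ω
      rcases hI01 ω with h | h <;>
        simp only [hFm_def, hD_def, hφ_def, h] <;> ring
    have e0 : ∫ ω, Fm ω * D ω ∂μ = ∫ ω, φ ω * I ω ∂μ - ∫ ω, m ω * G ω ∂μ := by
      rw [← integral_sub hφI hmG]
      exact integral_congr_ae (Filter.Eventually.of_forall fun ω => hpt ω)
    have e1 : ∫ ω, φ ω * Pv ω ∂μ
        = ∫ ω, ((Pv ω)⁻¹ - 1) * (S ω * G ω) ∂μ - ∫ ω, ((Pv ω)⁻¹ - 2) * (m ω * G ω) ∂μ := by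
      have i1 : Integrable (fun ω => ((Pv ω)⁻¹ - 1) * (S ω * G ω)) μ := by
        refine hSG.bdd_mul (hPi0.inv.sub measurable_const).aestronglyMeasurable
          (c := c⁻¹ + 1) (Filter.Eventually.of_forall fun ω => ?_)
        calc ‖(Pv ω)⁻¹ - 1‖ ≤ ‖(Pv ω)⁻¹‖ + ‖(1 : ℝ)‖ := norm_sub_le _ _
          _ ≤ c⁻¹ + 1 := by simpa using add_le_add_right (hPiInvbd ω) 1
      have i2 : Integrable (fun ω => ((Pv ω)⁻¹ - 2) * (m ω * G ω)) μ := by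
        refine hmG.bdd_mul (hPi0.inv.sub measurable_const).aestronglyMeasurable
          (c := c⁻¹ + 2) (Filter.Eventually.of_forall fun ω => ?_)
        calc ‖(Pv ω)⁻¹ - 2‖ ≤ ‖(Pv ω)⁻¹‖ + ‖(2 : ℝ)‖ := norm_sub_le _ _
          _ ≤ c⁻¹ + 2 := by
              have := hPiInvbd ω
              rw [Real.norm_two]
              linarith
      rw [← integral_sub i1 i2]
      refine integral_congr_ae (Filter.Eventually.of_forall fun ω => ?_)
      have h1 : (Pv ω)⁻¹ * Pv ω = 1 := inv_mul_cancel₀ (hPine ω)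
      simp only [hφ_def]
      linear_combination (((Pv ω)⁻¹ - 1) * (S ω * G ω) - ((Pv ω)⁻¹ - 2) * (m ω * G ω)) * h1
    have e2 : ∫ ω, ((Pv ω)⁻¹ - 2) * (m ω * G ω) ∂μ + ∫ ω, m ω * G ω ∂μ
        = ∫ ω, ((Pv ω)⁻¹ - 1) * (m ω * G ω) ∂μ := by
      have i2 : Integrable (fun ω => ((Pv ω)⁻¹ - 2) * (m ω * G ω)) μ := by
        refine hmG.bdd_mul (hPi0.inv.sub measurable_const).aestronglyMeasurable
          (c := c⁻¹ + 2) (Filter.Eventually.of_forall fun ω => ?_)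
        calc ‖(Pv ω)⁻¹ - 2‖ ≤ ‖(Pv ω)⁻¹‖ + ‖(2 : ℝ)‖ := norm_sub_le _ _
          _ ≤ c⁻¹ + 2 := by
              have := hPiInvbd ω
              rw [Real.norm_two]
              linarith
      rw [← integral_add i2 hmG]
      exact integral_congr_ae (Filter.Eventually.of_forall fun ω => by ring)
    -- tower property applied to ψ = ((Pv)⁻¹ - 1) * G
    have hψ𝒱 : StronglyMeasurable[𝒱] fun ω => ((Pv ω)⁻¹ - 1) * G ω :=
      ((hPi.inv.sub measurable_const).stronglyMeasurable).mul hG𝒱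
    have hψ2 : MemLp (fun ω => ((Pv ω)⁻¹ - 1) * G ω) 2 μ := by
      refine memℒp_two_mul ?_ hGL2
      refine memLp_top_of_bound (hPi0.inv.sub measurable_const).aestronglyMeasurable
        (c⁻¹ + 1) (Filter.Eventually.of_forall fun ω => ?_)
      calc ‖(Pv ω)⁻¹ - 1‖ ≤ ‖(Pv ω)⁻¹‖ + ‖(1 : ℝ)‖ := norm_sub_le _ _
        _ ≤ c⁻¹ + 1 := by simpa using add_le_add_right (hPiInvbd ω) 1
    have e3 : ∫ ω, ((Pv ω)⁻¹ - 1) * (S ω * G ω) ∂μ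
        = ∫ ω, ((Pv ω)⁻¹ - 1) * (m ω * G ω) ∂μ := by
      have t := claimV _ hψ𝒱 hψ2
      have l1 : ∫ ω, ((Pv ω)⁻¹ - 1) * (S ω * G ω) ∂μ
          = ∫ ω, (((Pv ω)⁻¹ - 1) * G ω) * S ω ∂μ :=
        integral_congr_ae (Filter.Eventually.of_forall fun ω => by ring)
      have l2 : ∫ ω, ((Pv ω)⁻¹ - 1) * (m ω * G ω) ∂μ
          = ∫ ω, (((Pv ω)⁻¹ - 1) * G ω) * m ω ∂μ :=
        integral_congr_ae (Filter.Eventually.of_forall fun ω => by ring)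
      rw [l1, l2, t]
    rw [e0, claimI _ hφ𝒲 hφint, e1, e3, ← e2]
    ring
  -- assemble
  have hFK2 : MemLp (fun ω => (Pv ω)⁻¹ * I ω * S ω - ((Pv ω)⁻¹ * I ω - 1) * K ω) 2 μ :=
    (memℒp_two_mul hPinf hSL2).sub (memℒp_two_mul hP1inf hKL2)
  have hMm := hMean m hm𝒱 hmL2
  have hMK := hMean K hK hKL2
  rw [variance_eq_sub hFm2, variance_eq_sub hFK2]
  have hFmsq : Integrable (fun ω => Fm ω ^ 2) μ := hFm2.integrable_sq
  have hDsq : Integrable (fun ω => D ω ^ 2) μ := hD2.integrable_sq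
  have hFmD : Integrable (fun ω => Fm ω * D ω) μ := integrable_mul_of_memℒp_two hFm2 hD2
  have hsum : Integrable (fun ω => 2 * (Fm ω * D ω) + D ω ^ 2) μ :=
    (hFmD.const_mul 2).add hDsq
  have hexp : ∫ ω, ((fun ω => (Pv ω)⁻¹ * I ω * S ω - ((Pv ω)⁻¹ * I ω - 1) * K ω) ^ 2) ω ∂μ
      = ∫ ω, Fm ω ^ 2 ∂μ + (∫ ω, (2 * (Fm ω * D ω) + D ω ^ 2) ∂μ) := by
    rw [← integral_add hFmsq hsum]
    refine integral_congr_ae (Filter.Eventually.of_forall fun ω => ?_)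
    simp only [Pi.pow_apply, hFm_def, hD_def, hG_def]
    ring
  have h2cross : ∫ ω, (2 * (Fm ω * D ω) + D ω ^ 2) ∂μ = ∫ ω, D ω ^ 2 ∂μ := by
    rw [integral_add (hFmD.const_mul 2) hDsq, integral_const_mul, hcross]
    ring
  have hgoal : ∫ ω, ((fun ω => (Pv ω)⁻¹ * I ω * S ω - ((Pv ω)⁻¹ * I ω - 1) * m ω) ^ 2) ω ∂μ
      = ∫ ω, Fm ω ^ 2 ∂μ :=
    integral_congr_ae (Filter.Eventually.of_forall fun ω => by
      simp only [Pi.pow_apply, hFm_def])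
  rw [hgoal, hexp, h2cross]
  have hμm : ∫ ω, ((fun ω => (Pv ω)⁻¹ * I ω * S ω - ((Pv ω)⁻¹ * I ω - 1) * m ω)) ω ∂μ = 0 := hMm
  have hμK : ∫ ω, ((fun ω => (Pv ω)⁻¹ * I ω * S ω - ((Pv ω)⁻¹ * I ω - 1) * K ω)) ω ∂μ = 0 := hMK
  rw [hμm, hμK]
  have : 0 ≤ ∫ ω, D ω ^ 2 ∂μ := integral_nonneg fun ω => sq_nonneg _
  linarith

end Aux

/-- Optimality of `κ_opt(V) = E[s(W) | V]` (Robins–Rotnitzky–Zhao): in the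
class of augmented influence functions `(I/π) s(W) - (I/π - 1) κ(V)` with
`W = (A,X,U,Y)`, `V = (A,X,Y)`, selection indicator `I` with
`E(I | W) = π(V)` bounded away from zero, `I ⫫ U | V`, and `E[s(W)] = 0`,
taking `κ` to be the conditional expectation `E[s(W) | V]` minimizes the
variance. -/
theorem stmt16 {Ω : Type*} [MeasurableSpace Ω] [StandardBorelSpace Ω]
    (μ : Measure Ω) [IsProbabilityMeasure μ]
    {p q : ℕ} (A Y : Ω → ℝ) (X : Ω → Fin p → ℝ) (U : Ω → Fin q → ℝ) (I : Ω → ℝ)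
    (hA : Measurable A) (hY : Measurable Y) (hX : Measurable X)
    (hU : Measurable U) (hI : Measurable I) (hI01 : ∀ ω, I ω = 0 ∨ I ω = 1)
    (π : ℝ × (Fin p → ℝ) × ℝ → ℝ) (hπm : Measurable π)
    (c : ℝ) (hc : 0 < c)
    (hπbd : ∀ ω, c ≤ π (A ω, X ω, Y ω) ∧ π (A ω, X ω, Y ω) ≤ 1)
    (hπ : (μ[I | MeasurableSpace.comap
        (fun ω => (A ω, X ω, U ω, Y ω)) inferInstance])
      =ᵐ[μ] fun ω => π (A ω, X ω, Y ω))
    (hCI : CondIndepFun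
      (MeasurableSpace.comap (fun ω => (A ω, X ω, Y ω)) inferInstance)
      ((hA.prodMk (hX.prodMk hY)).comap_le) I U μ)
    (s : ℝ × (Fin p → ℝ) × (Fin q → ℝ) × ℝ → ℝ) (hsm : Measurable s)
    (hsL2 : MemLp (fun ω => s (A ω, X ω, U ω, Y ω)) 2 μ)
    (hs0 : ∫ ω, s (A ω, X ω, U ω, Y ω) ∂μ = 0) :
    ∀ κ : ℝ × (Fin p → ℝ) × ℝ → ℝ, Measurable κ →
      MemLp (fun ω => κ (A ω, X ω, Y ω)) 2 μ →
      variance (fun ω => (π (A ω, X ω, Y ω))⁻¹ * I ω * s (A ω, X ω, U ω, Y ω) -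
          ((π (A ω, X ω, Y ω))⁻¹ * I ω - 1) *
            ((μ[fun ω' => s (A ω', X ω', U ω', Y ω') |
              MeasurableSpace.comap (fun ω' => (A ω', X ω', Y ω')) inferInstance]) ω)) μ ≤
        variance (fun ω => (π (A ω, X ω, Y ω))⁻¹ * I ω * s (A ω, X ω, U ω, Y ω) -
          ((π (A ω, X ω, Y ω))⁻¹ * I ω - 1) * κ (A ω, X ω, Y ω)) μ := by
  intro κ hκm hκ2
  have hWm : Measurable fun ω => (A ω, X ω, U ω, Y ω) :=
    hA.prodMk (hX.prodMk (hU.prodMk hY))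
  have hproj : Measurable fun w : ℝ × (Fin p → ℝ) × (Fin q → ℝ) × ℝ =>
      (w.1, w.2.1, w.2.2.2) :=
    measurable_fst.prodMk ((measurable_fst.comp measurable_snd).prodMk
      (measurable_snd.comp (measurable_snd.comp measurable_snd)))
  have hVW : MeasurableSpace.comap (fun ω => (A ω, X ω, Y ω)) inferInstance ≤
      MeasurableSpace.comap (fun ω => (A ω, X ω, U ω, Y ω)) inferInstance :=
    measurable_iff_comap_le.mp
      (hproj.comp (comap_measurable _))
  have hVfm : Measurable[MeasurableSpace.comap (fun ω => (A ω, X ω, Y ω)) inferInstance]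
      fun ω => (A ω, X ω, Y ω) := comap_measurable _
  have hWfm : Measurable[MeasurableSpace.comap (fun ω => (A ω, X ω, U ω, Y ω)) inferInstance]
      fun ω => (A ω, X ω, U ω, Y ω) := comap_measurable _
  exact rrz_aux μ hVW hWm.comap_le I
    (fun ω => s (A ω, X ω, U ω, Y ω)) (fun ω => π (A ω, X ω, Y ω))
    (fun ω => κ (A ω, X ω, Y ω)) hI hI01
    ((hsm.comp hWfm).stronglyMeasurable) hsL2 hs0
    (hπm.comp hVfm) c hc hπbd hπ
    ((hκm.comp hVfm).stronglyMeasurable) hκ2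
end
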